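/- For every integer n ≥ 1, every integer k, all real numbers p, q with 0 < q < p ≤ 1, and every real x: Σ_{m=0}^{n} (−1)^{n−m} · S_1(n,m) · Σ_{l=0}^{m} binom(m,l) · (−x)^l / [m−l+1]_{p,q}^k = Σ_{m=0}^{n} (−1)^{n−m} · S_1(n,m,x) / [m+1]_{p,q}^k. -/

import Mathlib

open Finset

/-- The `(p,q)`-integer `[m]_{p,q} = (p^m - q^m)/(p - q)`. -/
noncomputable def pqInt (p q : ℝ) (m : ℕ) : ℝ := (p ^ m - q ^ m) / (p - q)

/-- The unsigned Stirling numbers of the first kind, defined by the recurrence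
`S1(n+1, m+1) = n * S1(n, m+1) + S1(n, m)`, so that
`x(x+1)⋯(x+n-1) = ∑_{m=0}^{n} S1(n,m) x^m`. -/
def stirling1 : ℕ → ℕ → ℕ
  | 0, 0 => 1
  | 0, _ + 1 => 0
  | _ + 1, 0 => 0
  | n + 1, m + 1 => n * stirling1 n (m + 1) + stirling1 n m

/-- Carlitz's weighted Stirling numbers of the first kind,
`S1(n,m,x) = ∑_{i=0}^{n-m} binom(m+i,i) S1(n,m+i) x^i`. -/
noncomputable def stirling1W (n m : ℕ) (x : ℝ) : ℝ :=
  ∑ i ∈ Finset.range (n - m + 1), ((m + i).choose i : ℝ) * (stirling1 n (m + i) : ℝ) * x ^ i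

theorem pqPolyCauchy_first_kind_two_expressions
    (n : ℕ) (hn : 1 ≤ n) (k : ℤ)
    (p q : ℝ) (hq : 0 < q) (hqp : q < p) (hp : p ≤ 1) (x : ℝ) :
    ∑ m ∈ Finset.range (n + 1),
        (-1 : ℝ) ^ (n - m) * (stirling1 n m : ℝ) *
          ∑ l ∈ Finset.range (m + 1),
            (m.choose l : ℝ) * (-x) ^ l / pqInt p q (m - l + 1) ^ k =
      ∑ m ∈ Finset.range (n + 1),
        (-1 : ℝ) ^ (n - m) * stirling1W n m x / pqInt p q (m + 1) ^ k := by
  set P : ℕ → ℝ := fun j => pqInt p q (j + 1) ^ k with hP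
  set g : ℕ → ℕ → ℝ := fun m l =>
    (-1 : ℝ) ^ (n - m) * (stirling1 n m : ℝ) *
      ((m.choose l : ℝ) * (-x) ^ (m - l) / P l) with hg
  calc
    ∑ m ∈ Finset.range (n + 1),
        (-1 : ℝ) ^ (n - m) * (stirling1 n m : ℝ) *
          ∑ l ∈ Finset.range (m + 1),
            (m.choose l : ℝ) * (-x) ^ l / pqInt p q (m - l + 1) ^ k
      = ∑ m ∈ Finset.range (n + 1), ∑ l ∈ Finset.range (m + 1), g m l := by
        refine Finset.sum_congr rfl fun m hm => ?_
        rw [Finset.mul_sum]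
        rw [← Finset.sum_range_reflect
          (fun l => (-1 : ℝ) ^ (n - m) * (stirling1 n m : ℝ) *
            ((m.choose l : ℝ) * (-x) ^ (m - l) / P l)) (m + 1)]
        refine Finset.sum_congr rfl fun l hl => ?_
        have hl' : l ≤ m := Nat.lt_succ_iff.mp (Finset.mem_range.mp hl)
        have h1 : m + 1 - 1 - l = m - l := by omega
        have h2 : m - (m - l) = l := by omega
        rw [h1, Nat.choose_symm hl', h2]
    _ = ∑ l ∈ Finset.range (n + 1), ∑ m ∈ Finset.Ico l (n + 1), g m l := by
        simp only [Finset.range_eq_Ico]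
        exact (Finset.sum_Ico_Ico_comm 0 (n + 1) (fun l m => g m l)).symm
    _ = ∑ m ∈ Finset.range (n + 1),
          (-1 : ℝ) ^ (n - m) * stirling1W n m x / pqInt p q (m + 1) ^ k := by
        refine Finset.sum_congr rfl fun l hl => ?_
        have hln : l ≤ n := Nat.lt_succ_iff.mp (Finset.mem_range.mp hl)
        rw [Finset.sum_Ico_eq_sum_range]
        have hrange : n + 1 - l = n - l + 1 := by omega
        rw [hrange, stirling1W, Finset.mul_sum, Finset.sum_div]
        refine Finset.sum_congr rfl fun i hi => ?_
        have hi' : i ≤ n - l := Nat.lt_succ_iff.mp (Finset.mem_range.mp hi)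
        have h3 : n - (l + i) = n - l - i := by omega
        have h4 : l + i - l = i := by omega
        have h5 : (l + i).choose l = (l + i).choose i := by
          rw [← Nat.choose_symm (Nat.le_add_right l i), h4]
        have h7 : ((-1 : ℝ)) ^ (n - l - i) * (-1 : ℝ) ^ i = (-1 : ℝ) ^ (n - l) := by
          rw [← pow_add, Nat.sub_add_cancel hi']
        simp only [hg, hP, h3, h4, h5]
        rw [neg_pow x i]
        linear_combination ((stirling1 n (l + i) : ℝ) * (((l + i).choose i : ℝ) * x ^ i /
          (pqInt p q (l + 1) ^ k))) * h7
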